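/- arXiv:1311.3320 — 2 statements merged into one kernel-verified Lean document; each statement's English description precedes it below -/
import Mathlib

section
/- Let r ≥ 1 and let D be an effective divisor on the Hirzebruch surface F_r linearly equivalent to L_r = (r+1)F + E. If P is a point of F_r with mult_P(D) ≥ r+2, then D = (r+1)F_P + E where F_P is the fiber through P, and P lies on the negative section E; in particular mult_P(D) ≤ r+2 and at most one point of F_r has multiplicity ≥ r+2 on D. -/
open MvPolynomial

/-- The Picard grading of the Cox ring `k[x₀,x₁,x₂,x₃]` of the Hirzebruch surface
`F_r`: classes `(c, b) = c·F + b·E`; the fiber coordinates `x₀, x₁` have class `F`,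
the coordinate `x₂` cutting out the negative section `E` has class `E`, and `x₃`
has class `E + r·F`. -/
def hirzebruchCoxWeight (r : ℕ) : Fin 4 → ℕ × ℕ :=
  ![(1, 0), (1, 0), (0, 1), (r, 1)]

/-- A point of `F_r` is given in Cox coordinates by `p : Fin 4 → k` with
`(p 0, p 1) ≠ (0,0)` and `(p 2, p 3) ≠ (0,0)`. -/
def IsCoxPoint {k : Type*} [Field k] (p : Fin 4 → k) : Prop :=
  (p 0 ≠ 0 ∨ p 1 ≠ 0) ∧ (p 2 ≠ 0 ∨ p 3 ≠ 0)

/-- A Cox-homogeneous polynomial `s` has multiplicity at least `m` at the point with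
Cox coordinates `p` if all iterated partial derivatives of `s` of order `< m` vanish
at `p` (the correct notion in characteristic `0`). -/
def coxMultAtLeast {k : Type*} [Field k] (s : MvPolynomial (Fin 4) k) (m : ℕ)
    (p : Fin 4 → k) : Prop :=
  ∀ l : List (Fin 4), l.length < m →
    eval p (l.foldl (fun q i => pderiv i q) s) = 0

section Aux

variable {R : Type*} [CommSemiring R]

lemma aux_foldl_replicate (x : Fin 4) (n : ℕ) (g : MvPolynomial (Fin 4) R) :
    (List.replicate n x).foldl (fun q i => pderiv i q) g = (pderiv x)^[n] g := by
  induction n generalizing g with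
  | zero => rfl
  | succ n ih =>
    rw [List.replicate_succ, List.foldl_cons, ih, ← Function.iterate_succ_apply]

lemma aux_iter_pderiv_monomial (j : Fin 4) (n : ℕ) (d : Fin 4 →₀ ℕ) (c : R) :
    (pderiv j)^[n] (monomial d c)
      = monomial (d - Finsupp.single j n) (c * (d j).descFactorial n) := by
  induction n with
  | zero => simp
  | succ n ih =>
    rw [Function.iterate_succ_apply', ih, pderiv_monomial]
    have h1 : (d - Finsupp.single j n) j = d j - n := by
      simp [Finsupp.tsub_apply]
    have h2 : d - Finsupp.single j n - Finsupp.single j 1 = d - Finsupp.single j (n + 1) := by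
      ext x
      simp only [Finsupp.tsub_apply, Finsupp.single_apply]
      split <;> omega
    rw [h1, h2, Nat.descFactorial_succ, Nat.cast_mul]
    ring_nf

lemma aux_iter_pderiv_sum {ι : Type*} (x : Fin 4) (n : ℕ) (t : Finset ι)
    (f : ι → MvPolynomial (Fin 4) R) :
    (pderiv x)^[n] (∑ m ∈ t, f m) = ∑ m ∈ t, (pderiv x)^[n] (f m) := by
  induction n with
  | zero => rfl
  | succ n ih =>
    rw [Function.iterate_succ_apply', ih, map_sum]
    exact Finset.sum_congr rfl fun m _ => (Function.iterate_succ_apply' _ _ _).symm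

/-- Exponent vector of `X0^m * X1^n * X2^e2`. -/
noncomputable def auxE (m n e2 : ℕ) : Fin 4 →₀ ℕ :=
  Finsupp.single 0 m + Finsupp.single 1 n + Finsupp.single 2 e2

/-- Exponent vector of `X0 * X3`. -/
noncomputable def auxF0 : Fin 4 →₀ ℕ := Finsupp.single 0 1 + Finsupp.single 3 1

/-- Exponent vector of `X1 * X3`. -/
noncomputable def auxF1 : Fin 4 →₀ ℕ := Finsupp.single 1 1 + Finsupp.single 3 1

lemma auxE_apply0 (m n e2 : ℕ) : auxE m n e2 0 = m := by simp [auxE]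
lemma auxE_apply1 (m n e2 : ℕ) : auxE m n e2 1 = n := by
  simp [auxE, Finsupp.single_apply]
lemma auxE_apply2 (m n e2 : ℕ) : auxE m n e2 2 = e2 := by
  simp [auxE, Finsupp.single_apply]
lemma auxE_apply3 (m n e2 : ℕ) : auxE m n e2 3 = 0 := by
  simp [auxE, Finsupp.single_apply]

lemma auxE_sub0 (m n e2 i : ℕ) : auxE m n e2 - Finsupp.single 0 i = auxE (m - i) n e2 := by
  ext x
  fin_cases x <;>
    simp [auxE, Finsupp.tsub_apply, Finsupp.single_apply]

lemma auxE_sub1 (m n e2 j : ℕ) : auxE m n e2 - Finsupp.single 1 j = auxE m (n - j) e2 := by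
  ext x
  fin_cases x <;>
    simp [auxE, Finsupp.tsub_apply, Finsupp.single_apply]

lemma auxE_sub2 (m n e2 : ℕ) : auxE m n e2 - Finsupp.single 2 1 = auxE m n (e2 - 1) := by
  ext x
  fin_cases x <;>
    simp [auxE, Finsupp.tsub_apply, Finsupp.single_apply]

lemma auxE_mon (c : R) (m n e2 : ℕ) :
    monomial (auxE m n e2) c = C c * X 0 ^ m * X 1 ^ n * X 2 ^ e2 := by
  rw [C_apply, X_pow_eq_monomial, X_pow_eq_monomial, X_pow_eq_monomial,
    monomial_mul, monomial_mul, monomial_mul, auxE]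
  simp

lemma auxE_eval {k : Type*} [CommSemiring k] (p : Fin 4 → k) (c : k) (m n e2 : ℕ) :
    eval p (monomial (auxE m n e2) c) = c * p 0 ^ m * p 1 ^ n * p 2 ^ e2 := by
  rw [auxE_mon]; simp

lemma aux_eval_iter_term {k : Type*} [CommSemiring k] (p : Fin 4 → k) (c : k)
    (m n e2 i j : ℕ) :
    eval p ((pderiv 1)^[j] ((pderiv 0)^[i] (monomial (auxE m n e2) c)))
      = c * (m.descFactorial i) * (n.descFactorial j)
        * p 0 ^ (m - i) * p 1 ^ (n - j) * p 2 ^ e2 := by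
  rw [aux_iter_pderiv_monomial, auxE_apply0, auxE_sub0, aux_iter_pderiv_monomial,
    auxE_apply1, auxE_sub1, auxE_eval]

lemma aux_eval_iter_term1 {k : Type*} [CommSemiring k] (p : Fin 4 → k) (c : k)
    (m n e2 j : ℕ) :
    eval p ((pderiv 1)^[j] (monomial (auxE m n e2) c))
      = c * (n.descFactorial j) * p 0 ^ m * p 1 ^ (n - j) * p 2 ^ e2 := by
  have := aux_eval_iter_term p c m n e2 0 j
  simpa using this

lemma aux_eval_iter_term0 {k : Type*} [CommSemiring k] (p : Fin 4 → k) (c : k)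
    (m n e2 i : ℕ) :
    eval p ((pderiv 0)^[i] (monomial (auxE m n e2) c))
      = c * (m.descFactorial i) * p 0 ^ (m - i) * p 1 ^ n * p 2 ^ e2 := by
  have := aux_eval_iter_term p c m n e2 i 0
  simpa using this

lemma aux_weight (r : ℕ) (d : Fin 4 →₀ ℕ) :
    Finsupp.weight (hirzebruchCoxWeight r) d = (d 0 + d 1 + d 3 * r, d 2 + d 3) := by
  rw [Finsupp.weight_apply, Finsupp.sum_fintype]
  · rw [Fin.sum_univ_four]
    simp [hirzebruchCoxWeight, Prod.ext_iff]
  · intro i; simp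

lemma aux_classify (r : ℕ) (d : Fin 4 →₀ ℕ)
    (hd : Finsupp.weight (hirzebruchCoxWeight r) d = (r + 1, 1)) :
    d = auxF0 ∨ d = auxF1 ∨ ∃ m ≤ r + 1, d = auxE m (r + 1 - m) 1 := by
  rw [aux_weight, Prod.mk.injEq] at hd
  obtain ⟨h1, h2⟩ := hd
  have h3 : d 3 = 0 ∨ d 3 = 1 := by omega
  rcases h3 with h3 | h3
  · rw [h3, Nat.zero_mul, Nat.add_zero] at h1
    right; right
    refine ⟨d 0, by omega, ?_⟩
    ext x
    fin_cases x <;> simp [auxE, Finsupp.single_apply] <;> omega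
  · rw [h3] at h1 h2
    have h4 : d 0 = 1 ∧ d 1 = 0 ∨ d 0 = 0 ∧ d 1 = 1 := by omega
    rcases h4 with ⟨h4, h5⟩ | ⟨h4, h5⟩
    · left; ext x
      fin_cases x <;> simp [auxF0, Finsupp.single_apply] <;> omega
    · right; left; ext x
      fin_cases x <;> simp [auxF1, Finsupp.single_apply] <;> omega

lemma aux_wF0 (r : ℕ) : Finsupp.weight (hirzebruchCoxWeight r) auxF0 = (r + 1, 1) := by
  rw [aux_weight]
  simp [auxF0, Finsupp.single_apply, Prod.ext_iff]
  omega

lemma aux_wF1 (r : ℕ) : Finsupp.weight (hirzebruchCoxWeight r) auxF1 = (r + 1, 1) := by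
  rw [aux_weight]
  simp [auxF1, Finsupp.single_apply, Prod.ext_iff]
  omega

lemma aux_wE (r m : ℕ) (hm : m ≤ r + 1) :
    Finsupp.weight (hirzebruchCoxWeight r) (auxE m (r + 1 - m) 1) = (r + 1, 1) := by
  rw [aux_weight]
  simp [auxE, Finsupp.single_apply, Prod.ext_iff]
  omega

lemma aux_E_ne_F0 (m n : ℕ) : auxE m n 1 ≠ auxF0 := by
  intro h
  have := congrArg (fun f => f 2) h
  simp [auxE, auxF0, Finsupp.single_apply] at this

lemma aux_E_ne_F1 (m n : ℕ) : auxE m n 1 ≠ auxF1 := by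
  intro h
  have := congrArg (fun f => f 2) h
  simp [auxE, auxF1, Finsupp.single_apply] at this

lemma aux_F0_ne_F1 : auxF0 ≠ auxF1 := by
  intro h
  have := congrArg (fun f => f 0) h
  simp [auxF0, auxF1, Finsupp.single_apply] at this

lemma aux_E_inj {m n m' n' e2 : ℕ} (h : auxE m n e2 = auxE m' n' e2) : m = m' := by
  have := congrArg (fun f => f 0) h
  simpa [auxE, Finsupp.single_apply] using this

lemma aux_structure {k : Type*} [CommSemiring k] (r : ℕ) (s : MvPolynomial (Fin 4) k)
    (hhom : s.IsWeightedHomogeneous (hirzebruchCoxWeight r) (r + 1, 1)) :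
    s = monomial auxF0 (coeff auxF0 s) + monomial auxF1 (coeff auxF1 s)
      + ∑ m ∈ Finset.range (r + 2),
          monomial (auxE m (r + 1 - m) 1) (coeff (auxE m (r + 1 - m) 1) s) := by
  ext d
  rw [coeff_add, coeff_add, coeff_sum]
  simp only [coeff_monomial]
  by_cases hw : Finsupp.weight (hirzebruchCoxWeight r) d = (r + 1, 1)
  · rcases aux_classify r d hw with h | h | ⟨m, hm, h⟩
    · subst h
      rw [if_pos rfl, if_neg (Ne.symm aux_F0_ne_F1), Finset.sum_eq_zero, add_zero, add_zero]
      intro m _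
      rw [if_neg (aux_E_ne_F0 _ _)]
    · subst h
      rw [if_neg aux_F0_ne_F1, if_pos rfl, Finset.sum_eq_zero, add_zero, zero_add]
      intro m _
      rw [if_neg (aux_E_ne_F1 _ _)]
    · subst h
      rw [if_neg (Ne.symm (aux_E_ne_F0 _ _)), if_neg (Ne.symm (aux_E_ne_F1 _ _))]
      rw [Finset.sum_eq_single m]
      · rw [if_pos rfl, zero_add, zero_add]
      · intro m' _ hne
        rw [if_neg (fun h => hne (aux_E_inj h))]
      · intro hmem
        exact absurd (Finset.mem_range.mpr (by omega)) hmem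
  · have hz : coeff d s = 0 := by
      by_contra h
      exact hw (hhom h)
    rw [hz, if_neg, if_neg, Finset.sum_eq_zero, add_zero, add_zero]
    · intro m hmem
      rw [if_neg]
      intro h
      rw [← h] at hw
      exact hw (aux_wE r m (by have := Finset.mem_range.mp hmem; omega))
    · intro h; rw [← h] at hw; exact hw (aux_wF1 r)
    · intro h; rw [← h] at hw; exact hw (aux_wF0 r)

end Aux


lemma aux_dF_succ (n : ℕ) : Nat.descFactorial (n + 1) n = (n + 1).factorial := by
  induction n with
  | zero => rfl
  | succ n ih =>
    rw [Nat.succ_descFactorial_succ, ih, Nat.factorial_succ, Nat.factorial_succ,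
      Nat.factorial_succ]

lemma aux_nat (r i : ℕ) (hi : i ≤ r) :
    Nat.choose (r + 1) i * (Nat.descFactorial i i * Nat.descFactorial (r + 1 - i) (r - i))
      = Nat.choose (r + 1) (i + 1)
        * (Nat.descFactorial (i + 1) i * Nat.descFactorial (r - i) (r - i)) := by
  have h1 : r + 1 - i = (r - i) + 1 := by omega
  rw [Nat.descFactorial_self, Nat.descFactorial_self, h1, aux_dF_succ, aux_dF_succ]
  have h2 := Nat.choose_mul_factorial_mul_factorial (show i ≤ r + 1 by omega)
  have h3 := Nat.choose_mul_factorial_mul_factorial (show i + 1 ≤ r + 1 by omega)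
  rw [h1] at h2
  rw [show r + 1 - (i + 1) = r - i from by omega] at h3
  calc Nat.choose (r + 1) i * (i.factorial * (r - i + 1).factorial)
      = Nat.choose (r + 1) i * i.factorial * (r - i + 1).factorial := by ring
    _ = Nat.choose (r + 1) (i + 1) * (i + 1).factorial * (r - i).factorial := by rw [h2, h3]
    _ = Nat.choose (r + 1) (i + 1) * ((i + 1).factorial * (r - i).factorial) := by ring

lemma aux_dF_ne_zero {n m : ℕ} (h : m ≤ n) : Nat.descFactorial n m ≠ 0 := by
  intro h0
  exact absurd (Nat.descFactorial_eq_zero_iff_lt.mp h0) (by omega)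

lemma aux_key {k : Type*} [Field k] [CharZero k] (r : ℕ) (hr : 1 ≤ r)
    (s : MvPolynomial (Fin 4) k) (hs : s ≠ 0)
    (hhom : s.IsWeightedHomogeneous (hirzebruchCoxWeight r) (r + 1, 1))
    (p : Fin 4 → k) (hp : IsCoxPoint p)
    (hmult : coxMultAtLeast s (r + 2) p) :
    ∃ c : k, c ≠ 0 ∧ s = C c * (C (p 1) * X 0 - C (p 0) * X 1) ^ (r + 1) * X 2
      ∧ p 2 = 0 ∧ ¬ coxMultAtLeast s (r + 3) p := by
  have hsdec := aux_structure r s hhom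
  -- the coefficient of X0*X3 vanishes
  have hA : coeff auxF0 s = 0 := by
    have h2 := hmult [0, 3] (by simp; omega)
    have hfold : (([0, 3] : List (Fin 4)).foldl (fun q i => pderiv i q) s)
        = pderiv 3 (pderiv 0 s) := rfl
    rw [hfold] at h2
    have f1 : pderiv 3 (pderiv 0 (monomial auxF0 (coeff auxF0 s)))
        = monomial 0 (coeff auxF0 s) := by
      rw [pderiv_monomial]
      have h0 : auxF0 0 = 1 := by simp [auxF0, Finsupp.single_apply]
      have hsub : auxF0 - Finsupp.single 0 1 = Finsupp.single 3 1 := by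
        ext x; fin_cases x <;> simp [auxF0, Finsupp.tsub_apply, Finsupp.single_apply]
      rw [h0, hsub, pderiv_monomial]
      simp
    have f2 : pderiv 3 (pderiv 0 (monomial auxF1 (coeff auxF1 s))) = 0 := by
      rw [pderiv_monomial]
      have h0 : auxF1 0 = 0 := by simp [auxF1, Finsupp.single_apply]
      rw [h0]
      simp
    have f3 : ∀ m : ℕ, pderiv 3 (pderiv 0 (monomial (auxE m (r + 1 - m) 1)
        (coeff (auxE m (r + 1 - m) 1) s))) = 0 := by
      intro m
      rw [pderiv_monomial, auxE_sub0, pderiv_monomial, auxE_apply3]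
      simp
    conv at h2 => lhs; rw [hsdec]
    simp only [map_add, map_sum] at h2
    rw [f1, f2] at h2
    simp only [f3, map_zero, Finset.sum_const, smul_zero, add_zero] at h2
    simpa using h2
  have hB : coeff auxF1 s = 0 := by
    have h2 := hmult [1, 3] (by simp; omega)
    have hfold : (([1, 3] : List (Fin 4)).foldl (fun q i => pderiv i q) s)
        = pderiv 3 (pderiv 1 s) := rfl
    rw [hfold] at h2
    have f1 : pderiv 3 (pderiv 1 (monomial auxF1 (coeff auxF1 s)))
        = monomial 0 (coeff auxF1 s) := by
      rw [pderiv_monomial]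
      have h0 : auxF1 1 = 1 := by simp [auxF1, Finsupp.single_apply]
      have hsub : auxF1 - Finsupp.single 1 1 = Finsupp.single 3 1 := by
        ext x; fin_cases x <;> simp [auxF1, Finsupp.tsub_apply, Finsupp.single_apply]
      rw [h0, hsub, pderiv_monomial]
      simp
    have f2 : pderiv 3 (pderiv 1 (monomial auxF0 (coeff auxF0 s))) = 0 := by
      rw [pderiv_monomial]
      have h0 : auxF0 1 = 0 := by simp [auxF0, Finsupp.single_apply]
      rw [h0]
      simp
    have f3 : ∀ m : ℕ, pderiv 3 (pderiv 1 (monomial (auxE m (r + 1 - m) 1)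
        (coeff (auxE m (r + 1 - m) 1) s))) = 0 := by
      intro m
      rw [pderiv_monomial, auxE_sub1, pderiv_monomial, auxE_apply3]
      simp
    conv at h2 => lhs; rw [hsdec]
    simp only [map_add, map_sum] at h2
    rw [f1, f2] at h2
    simp only [f3, map_zero, Finset.sum_const, smul_zero, add_zero, zero_add] at h2
    simpa using h2
  obtain ⟨a, hsimp⟩ : ∃ a : ℕ → k,
      s = ∑ m ∈ Finset.range (r + 2), monomial (auxE m (r + 1 - m) 1) (a m) := by
    refine ⟨fun m => coeff (auxE m (r + 1 - m) 1) s, ?_⟩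
    conv_lhs => rw [hsdec]
    rw [hA, hB]
    simp
  clear hsdec hA hB
  have hderiv2 : pderiv 2 s
      = ∑ m ∈ Finset.range (r + 2), monomial (auxE m (r + 1 - m) 0) (a m) := by
    rw [hsimp, map_sum]
    refine Finset.sum_congr rfl fun m _ => ?_
    rw [pderiv_monomial, auxE_sub2, auxE_apply2]
    simp
  have star : ∀ i, i ≤ r →
      (Nat.descFactorial i i * Nat.descFactorial (r + 1 - i) (r - i) : k) * (p 1 * a i)
        + (Nat.descFactorial (i + 1) i * Nat.descFactorial (r - i) (r - i) : k)
          * (p 0 * a (i + 1)) = 0 := by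
    intro i hi
    have h2 := hmult (2 :: (List.replicate i 0 ++ List.replicate (r - i) 1))
      (by simp; omega)
    rw [List.foldl_cons, List.foldl_append, aux_foldl_replicate, aux_foldl_replicate] at h2
    rw [hderiv2, aux_iter_pderiv_sum, aux_iter_pderiv_sum, map_sum] at h2
    simp only [aux_eval_iter_term, pow_zero, mul_one] at h2
    have hsub : ({i, i + 1} : Finset ℕ) ⊆ Finset.range (r + 2) := by
      intro x hx
      simp only [Finset.mem_insert, Finset.mem_singleton] at hx
      rcases hx with h | h <;> simp [Finset.mem_range] <;> omega
    rw [← Finset.sum_subset hsub] at h2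
    · rw [Finset.sum_insert (by simp), Finset.sum_singleton] at h2
      rw [show r + 1 - (i + 1) = r - i from by omega,
        show i - i = 0 from by omega,
        show (r + 1 - i) - (r - i) = 1 from by omega,
        show (i + 1) - i = 1 from by omega,
        show (r - i) - (r - i) = 0 from by omega] at h2
      rw [pow_zero, pow_one, pow_one, pow_zero] at h2
      linear_combination h2
    · intro x hx hnx
      simp only [Finset.mem_insert, Finset.mem_singleton] at hnx
      push_neg at hnx
      rcases Nat.lt_or_ge x i with h | h
      · rw [Nat.descFactorial_eq_zero_iff_lt.mpr h]
        push_cast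
        ring
      · have hx2 : x ≤ r + 1 := by have := Finset.mem_range.mp hx; omega
        have : r + 1 - x < r - i := by omega
        rw [Nat.descFactorial_eq_zero_iff_lt.mpr this]
        push_cast
        ring
  obtain ⟨c, hat⟩ : ∃ c : k, ∀ m, m ≤ r + 1 →
      a m = c * (Nat.choose (r + 1) m) * p 1 ^ m * (-p 0) ^ (r + 1 - m) := by
    by_cases hp0 : p 0 = 0
    · have hp1 : p 1 ≠ 0 := by
        rcases hp.1 with h | h
        · exact absurd hp0 h
        · exact h
      have hz : ∀ i, i ≤ r → a i = 0 := by
        intro i hi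
        have h2 := star i hi
        rw [hp0] at h2
        have hAk : ((Nat.descFactorial i i : k)) * (Nat.descFactorial (r + 1 - i) (r - i)) ≠ 0 := by
          refine mul_ne_zero ?_ ?_ <;>
            exact Nat.cast_ne_zero.mpr (aux_dF_ne_zero (by omega))
        have h3 : ((Nat.descFactorial i i : k)) * (Nat.descFactorial (r + 1 - i) (r - i))
            * (p 1 * a i) = 0 := by linear_combination h2
        rcases mul_eq_zero.mp h3 with h | h
        · exact absurd h hAk
        · rcases mul_eq_zero.mp h with h | h
          · exact absurd h hp1
          · exact h
      refine ⟨a (r + 1) * (p 1 ^ (r + 1))⁻¹, ?_⟩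
      intro m hm
      rcases Nat.lt_or_ge m (r + 1) with h | h
      · rw [hz m (by omega), hp0, neg_zero, zero_pow (show r + 1 - m ≠ 0 by omega)]
        ring
      · have hm' : m = r + 1 := by omega
        subst hm'
        rw [Nat.choose_self, Nat.sub_self, hp0, pow_zero, Nat.cast_one]
        have : p 1 ^ (r + 1) ≠ 0 := pow_ne_zero _ hp1
        field_simp
    · have hne : (-p 0) ^ (r + 1) ≠ 0 := pow_ne_zero _ (neg_ne_zero.mpr hp0)
      refine ⟨a 0 * ((-p 0) ^ (r + 1))⁻¹, ?_⟩
      intro m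
      induction m with
      | zero =>
        intro _
        rw [Nat.choose_zero_right, Nat.sub_zero, pow_zero, Nat.cast_one]
        field_simp
      | succ i ih =>
        intro hm1
        have hi : i ≤ r := by omega
        have h2 := star i hi
        rw [ih (by omega)] at h2
        rw [show r + 1 - i = (r - i) + 1 from by omega, pow_succ] at h2
        rw [show r + 1 - (i + 1) = r - i from by omega]
        have hnatk : ((Nat.choose (r + 1) i : k))
              * (Nat.descFactorial i i * Nat.descFactorial ((r - i) + 1) (r - i))
            = (Nat.choose (r + 1) (i + 1))
              * (Nat.descFactorial (i + 1) i * Nat.descFactorial (r - i) (r - i)) := by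
          have hn := aux_nat r i hi
          rw [show r + 1 - i = (r - i) + 1 from by omega] at hn
          exact_mod_cast hn
        have hBk : ((Nat.descFactorial (i + 1) i : k)) * (Nat.descFactorial (r - i) (r - i)) ≠ 0 := by
          refine mul_ne_zero ?_ ?_ <;>
            exact Nat.cast_ne_zero.mpr (aux_dF_ne_zero (by omega))
        apply mul_left_cancel₀ (mul_ne_zero hBk hp0)
        push_cast at hnatk h2 ⊢
        linear_combination h2
          + (a 0 * ((-p 0) ^ (r + 1))⁻¹ * p 1 ^ (i + 1) * (-p 0) ^ (r - i) * p 0) * hnatk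
  have hexp : (C c * (C (p 1) * X 0 - C (p 0) * X 1) ^ (r + 1) * X 2 : MvPolynomial (Fin 4) k)
      = ∑ m ∈ Finset.range (r + 2), monomial (auxE m (r + 1 - m) 1)
          (c * (Nat.choose (r + 1) m) * p 1 ^ m * (-p 0) ^ (r + 1 - m)) := by
    have hsub : (C (p 1) * X 0 - C (p 0) * X 1 : MvPolynomial (Fin 4) k)
        = C (p 1) * X 0 + C (-p 0) * X 1 := by
      rw [map_neg]; ring
    rw [hsub, add_pow, Finset.mul_sum, Finset.sum_mul]
    refine Finset.sum_congr rfl fun m hm => ?_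
    rw [auxE_mon, mul_pow, mul_pow, pow_one, ← C_pow, ← C_pow, ← C_eq_coe_nat]
    simp only [C_mul]
    ring
  have heq : s = C c * (C (p 1) * X 0 - C (p 0) * X 1) ^ (r + 1) * X 2 := by
    rw [hexp, hsimp]
    refine Finset.sum_congr rfl fun m hm => ?_
    rw [hat m (by have := Finset.mem_range.mp hm; omega)]
  have hc : c ≠ 0 := by
    intro h0
    apply hs
    rw [heq, h0, map_zero, zero_mul, zero_mul]
  have hp1case : p 0 = 0 → p 1 ≠ 0 := by
    intro h
    rcases hp.1 with h' | h'
    · exact absurd h h'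
    · exact h'
  have ha0 : p 0 ≠ 0 → a 0 ≠ 0 := by
    intro h0
    rw [hat 0 (by omega), Nat.choose_zero_right, Nat.cast_one, Nat.sub_zero, pow_zero]
    have := pow_ne_zero (r + 1) (neg_ne_zero.mpr h0)
    intro hx
    rcases mul_eq_zero.mp hx with hx | hx
    · rcases mul_eq_zero.mp hx with hx | hx
      · rcases mul_eq_zero.mp hx with hx | hx
        · exact hc hx
        · exact one_ne_zero hx
      · exact one_ne_zero hx
    · exact this hx
  have haR : p 0 = 0 → a (r + 1) ≠ 0 := by
    intro h0
    rw [hat (r + 1) le_rfl, Nat.choose_self, Nat.cast_one, Nat.sub_self, pow_zero]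
    have := pow_ne_zero (r + 1) (hp1case h0)
    intro hx
    rcases mul_eq_zero.mp hx with hx | hx
    · rcases mul_eq_zero.mp hx with hx | hx
      · rcases mul_eq_zero.mp hx with hx | hx
        · exact hc hx
        · exact one_ne_zero hx
      · exact this hx
    · exact one_ne_zero hx
  have hdFne : ((Nat.descFactorial (r + 1) (r + 1) : ℕ) : k) ≠ 0 :=
    Nat.cast_ne_zero.mpr (aux_dF_ne_zero le_rfl)
  have hp2 : p 2 = 0 := by
    by_cases hp0 : p 0 = 0
    · have h2 := hmult (List.replicate (r + 1) 0) (by simp)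
      rw [aux_foldl_replicate, hsimp, aux_iter_pderiv_sum, map_sum] at h2
      simp only [aux_eval_iter_term0] at h2
      rw [Finset.sum_eq_single (r + 1)] at h2
      · rw [Nat.sub_self] at h2
        simp only [pow_zero, mul_one, one_mul, pow_one] at h2
        rcases mul_eq_zero.mp h2 with hx | hx
        · rcases mul_eq_zero.mp hx with hx | hx
          · exact absurd hx (haR hp0)
          · exact absurd hx hdFne
        · exact hx
      · intro b hb hbne
        have : b < r + 1 := by have := Finset.mem_range.mp hb; omega
        rw [Nat.descFactorial_eq_zero_iff_lt.mpr this, Nat.cast_zero]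
        ring
      · intro hmem
        exact absurd (Finset.mem_range.mpr (by omega)) hmem
    · have h2 := hmult (List.replicate (r + 1) 1) (by simp)
      rw [aux_foldl_replicate, hsimp, aux_iter_pderiv_sum, map_sum] at h2
      simp only [aux_eval_iter_term1] at h2
      rw [Finset.sum_eq_single 0] at h2
      · rw [Nat.sub_zero, Nat.sub_self] at h2
        simp only [pow_zero, mul_one, one_mul, pow_one] at h2
        rcases mul_eq_zero.mp h2 with hx | hx
        · rcases mul_eq_zero.mp hx with hx | hx
          · exact absurd hx (ha0 hp0)
          · exact absurd hx hdFne
        · exact hx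
      · intro b hb hbne
        have : r + 1 - b < r + 1 := by have := Finset.mem_range.mp hb; omega
        rw [Nat.descFactorial_eq_zero_iff_lt.mpr this, Nat.cast_zero]
        ring
      · intro hmem
        exact absurd (Finset.mem_range.mpr (by omega)) hmem
  have hnm : ¬ coxMultAtLeast s (r + 3) p := by
    intro hcon
    by_cases hp0 : p 0 = 0
    · have h2 := hcon (2 :: List.replicate (r + 1) 0) (by simp)
      rw [List.foldl_cons, aux_foldl_replicate, hderiv2, aux_iter_pderiv_sum, map_sum] at h2
      simp only [aux_eval_iter_term0] at h2
      rw [Finset.sum_eq_single (r + 1)] at h2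
      · rw [Nat.sub_self] at h2
        simp only [pow_zero, mul_one, one_mul] at h2
        rcases mul_eq_zero.mp h2 with hx | hx
        · exact absurd hx (haR hp0)
        · exact absurd hx hdFne
      · intro b hb hbne
        have : b < r + 1 := by have := Finset.mem_range.mp hb; omega
        rw [Nat.descFactorial_eq_zero_iff_lt.mpr this, Nat.cast_zero]
        ring
      · intro hmem
        exact absurd (Finset.mem_range.mpr (by omega)) hmem
    · have h2 := hcon (2 :: List.replicate (r + 1) 1) (by simp)
      rw [List.foldl_cons, aux_foldl_replicate, hderiv2, aux_iter_pderiv_sum, map_sum] at h2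
      simp only [aux_eval_iter_term1] at h2
      rw [Finset.sum_eq_single 0] at h2
      · rw [Nat.sub_zero, Nat.sub_self] at h2
        simp only [pow_zero, mul_one, one_mul] at h2
        rcases mul_eq_zero.mp h2 with hx | hx
        · exact absurd hx (ha0 hp0)
        · exact absurd hx hdFne
      · intro b hb hbne
        have : r + 1 - b < r + 1 := by have := Finset.mem_range.mp hb; omega
        rw [Nat.descFactorial_eq_zero_iff_lt.mpr this, Nat.cast_zero]
        ring
      · intro hmem
        exact absurd (Finset.mem_range.mpr (by omega)) hmem
  exact ⟨c, hc, heq, hp2, hnm⟩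
/-- Example 4.2 / Proposition 4.6: let `r ≥ 1` and let `D = {s = 0}` be an effective
divisor on `F_r` in the linear system `|L_r| = |(r+1)F + E|`, i.e. `s ≠ 0` is
Cox-homogeneous of class `(r+1)·F + E`. If `P` (with Cox coordinates `p`) satisfies
`mult_P(D) ≥ r+2`, then `D = (r+1)·F_P + E` where `F_P` is the fiber through `P`
(cut out by `p₁·x₀ - p₀·x₁`) and `E` is the negative section (cut out by `x₂`);
moreover `P` lies on `E`, `mult_P(D) ≤ r+2`, and any point of multiplicity `≥ r+2`
on `D` coincides with `P` (equal Cox coordinates up to the torus action). -/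
theorem stmt_11 (k : Type*) [Field k] [IsAlgClosed k] [CharZero k]
    (r : ℕ) (hr : 1 ≤ r)
    (s : MvPolynomial (Fin 4) k) (hs : s ≠ 0)
    (hhom : s.IsWeightedHomogeneous (hirzebruchCoxWeight r) (r + 1, 1))
    (p : Fin 4 → k) (hp : IsCoxPoint p)
    (hmult : coxMultAtLeast s (r + 2) p) :
    (∃ c : k, c ≠ 0 ∧
        s = C c * (C (p 1) * X 0 - C (p 0) * X 1) ^ (r + 1) * X 2) ∧
      p 2 = 0 ∧
      ¬ coxMultAtLeast s (r + 3) p ∧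
      ∀ q : Fin 4 → k, IsCoxPoint q → coxMultAtLeast s (r + 2) q →
        ∃ a b : k, a ≠ 0 ∧ b ≠ 0 ∧
          q 0 = a * p 0 ∧ q 1 = a * p 1 ∧ q 2 = b * p 2 ∧
          q 3 = a ^ r * b * p 3 := by
  obtain ⟨c, hc, heq, hp2, hnm⟩ := aux_key r hr s hs hhom p hp hmult
  refine ⟨⟨c, hc, heq⟩, hp2, hnm, ?_⟩
  intro q hq hqmult
  obtain ⟨cq, hcq, heqq, hq2, -⟩ := aux_key r hr s hs hhom q hq hqmult
  have hp3 : p 3 ≠ 0 := by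
    rcases hp.2 with h | h
    · exact absurd hp2 h
    · exact h
  have hq3 : q 3 ≠ 0 := by
    rcases hq.2 with h | h
    · exact absurd hq2 h
    · exact h
  have hx : q 1 * p 0 - q 0 * p 1 = 0 := by
    have h0 := heq.symm.trans heqq
    have h1 := congrArg (eval (![p 0, p 1, 1, 0] : Fin 4 → k)) h0
    simp only [map_mul, map_pow, map_sub, eval_C, eval_X] at h1
    have h2 : cq * (q 1 * p 0 - q 0 * p 1) ^ (r + 1) = 0 := by
      rw [show (![p 0, p 1, 1, 0] : Fin 4 → k) 0 = p 0 from rfl,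
        show (![p 0, p 1, 1, 0] : Fin 4 → k) 1 = p 1 from rfl,
        show (![p 0, p 1, 1, 0] : Fin 4 → k) 2 = 1 from rfl] at h1
      rw [show p 1 * p 0 - p 0 * p 1 = 0 from by ring] at h1
      rw [zero_pow (by omega : r + 1 ≠ 0)] at h1
      linear_combination -h1
    have h3 : (q 1 * p 0 - q 0 * p 1) ^ (r + 1) = 0 := by
      rcases mul_eq_zero.mp h2 with h | h
      · exact absurd h hcq
      · exact h
    exact pow_eq_zero_iff (by omega : r + 1 ≠ 0) |>.mp h3
  by_cases hp0 : p 0 = 0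
  · have hp1 : p 1 ≠ 0 := by
      rcases hp.1 with h | h
      · exact absurd hp0 h
      · exact h
    have hq0 : q 0 = 0 := by
      have : q 0 * p 1 = 0 := by
        rw [hp0] at hx
        linear_combination -hx
      rcases mul_eq_zero.mp this with h | h
      · exact h
      · exact absurd h hp1
    have hq1 : q 1 ≠ 0 := by
      rcases hq.1 with h | h
      · exact absurd hq0 h
      · exact h
    have ha : q 1 / p 1 ≠ 0 := div_ne_zero hq1 hp1
    refine ⟨q 1 / p 1, q 3 * ((q 1 / p 1) ^ r * p 3)⁻¹, ha, ?_, ?_, ?_, ?_, ?_⟩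
    · exact mul_ne_zero hq3 (inv_ne_zero (mul_ne_zero (pow_ne_zero _ ha) hp3))
    · rw [hq0, hp0, mul_zero]
    · field_simp
    · rw [hq2, hp2, mul_zero]
    · field_simp
  · have hq0 : q 0 ≠ 0 := by
      intro h0
      have hq1 : q 1 = 0 := by
        have : q 1 * p 0 = 0 := by
          rw [h0] at hx
          linear_combination hx
        rcases mul_eq_zero.mp this with h | h
        · exact h
        · exact absurd h hp0
      rcases hq.1 with h | h
      · exact h h0
      · exact h hq1
    have ha : q 0 / p 0 ≠ 0 := div_ne_zero hq0 hp0
    refine ⟨q 0 / p 0, q 3 * ((q 0 / p 0) ^ r * p 3)⁻¹, ha, ?_, ?_, ?_, ?_, ?_⟩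
    · exact mul_ne_zero hq3 (inv_ne_zero (mul_ne_zero (pow_ne_zero _ ha) hp3))
    · field_simp
    · rw [div_mul_eq_mul_div, eq_div_iff hp0]
      linear_combination hx
    · rw [hq2, hp2, mul_zero]
    · field_simp
end

section
/- Let r ≥ 2 and let D be an effective divisor on the Hirzebruch surface F_r linearly equivalent to L_r = (r+1)F + E. If P and P' are two points with mult_P(D) ≥ r+1 and mult_{P'}(D) ≥ r+1, then P and P' lie in the same fiber of the ruling F_r → P¹. -/
open MvPolynomial

lemma hirz_weight_eq {r : ℕ} (d : Fin 4 →₀ ℕ) :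
    Finsupp.weight (hirzebruchCoxWeight r) d =
      (d 0 + d 1 + d 3 * r, d 2 + d 3) := by
  rw [Finsupp.weight_apply, Finsupp.sum_fintype _ _ (fun i => by simp)]
  simp [hirzebruchCoxWeight, Fin.sum_univ_four, Prod.ext_iff, smul_eq_mul]

noncomputable def eeExp (r m : ℕ) : Fin 4 →₀ ℕ :=
  Finsupp.single 0 m + Finsupp.single 1 (r + 1 - m) + Finsupp.single 2 1

noncomputable def ebExp (i : Fin 4) : Fin 4 →₀ ℕ :=
  Finsupp.single i 1 + Finsupp.single 3 1

@[simp] lemma eeExp_apply (r m : ℕ) (i : Fin 4) :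
    eeExp r m i = if i = 0 then m else if i = 1 then r + 1 - m else if i = 2 then 1 else 0 := by
  fin_cases i <;> simp [eeExp, Finsupp.single_apply]

lemma ebExp_apply (j : Fin 4) (i : Fin 4) (hj : j = 0 ∨ j = 1) :
    ebExp j i = if i = j then 1 else if i = 3 then 1 else 0 := by
  rcases hj with rfl | rfl <;> fin_cases i <;> simp [ebExp, Finsupp.single_apply]

/-- decomposition -/
lemma hirz_decomp {k : Type*} [Field k] {r : ℕ}
    (s : MvPolynomial (Fin 4) k)
    (hhom : s.IsWeightedHomogeneous (hirzebruchCoxWeight r) (r + 1, 1)) :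
    s = (∑ m ∈ Finset.range (r + 2), monomial (eeExp r m) (coeff (eeExp r m) s))
        + monomial (ebExp 0) (coeff (ebExp 0) s) + monomial (ebExp 1) (coeff (ebExp 1) s) := by
  have hb0 : ∀ i, ebExp 0 i = if i = 0 then 1 else if i = 3 then 1 else 0 :=
    fun i => ebExp_apply 0 i (Or.inl rfl)
  have hb1 : ∀ i, ebExp 1 i = if i = 1 then 1 else if i = 3 then 1 else 0 :=
    fun i => ebExp_apply 1 i (Or.inr rfl)
  apply MvPolynomial.ext
  intro d
  rw [coeff_add, coeff_add, MvPolynomial.coeff_sum]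
  simp only [coeff_monomial]
  by_cases hd : coeff d s = 0
  · rw [hd]
    have h1 : ∀ m ∈ Finset.range (r+2),
        (if eeExp r m = d then coeff (eeExp r m) s else 0) = 0 := by
      intro m _; split
      · next h => rw [h, hd]
      · rfl
    have e0 : (if ebExp 0 = d then coeff (ebExp 0) s else 0) = 0 := by
      split
      · next h => rw [h, hd]
      · rfl
    have e1 : (if ebExp 1 = d then coeff (ebExp 1) s else 0) = 0 := by
      split
      · next h => rw [h, hd]
      · rfl
    rw [Finset.sum_congr rfl h1, Finset.sum_const_zero, e0, e1, add_zero, add_zero]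
  · have hw := hhom hd
    rw [hirz_weight_eq] at hw
    have h2 : d 2 + d 3 = 1 := congrArg Prod.snd hw
    have h1 : d 0 + d 1 + d 3 * r = r + 1 := congrArg Prod.fst hw
    rcases Nat.eq_zero_or_pos (d 3) with h3 | h3
    · -- d3 = 0, d2 = 1, d = eeExp r (d 0)
      rw [h3] at h1 h2
      simp only [Nat.zero_mul, add_zero] at h1 h2
      have h2' : d 2 = 1 := by omega
      have hde : d = eeExp r (d 0) := by
        apply Finsupp.ext; intro i
        fin_cases i <;> simp <;> omega
      have hmem : d 0 ∈ Finset.range (r + 2) := by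
        simp only [Finset.mem_range]; omega
      rw [Finset.sum_eq_single_of_mem (d 0) hmem]
      · rw [if_pos hde.symm, ← hde]
        rw [if_neg, if_neg, add_zero, add_zero]
        · intro h; have := DFunLike.congr_fun h (2 : Fin 4); simp [hb1 2, h2'] at this
        · intro h; have := DFunLike.congr_fun h (2 : Fin 4); simp [hb0 2, h2'] at this
      · intro m _ hm
        rw [if_neg]
        intro h; have := DFunLike.congr_fun h (0 : Fin 4); simp at this; omega
    · -- d3 = 1, d2 = 0
      have h3' : d 3 = 1 := by omega
      rw [h3'] at h1 h2
      have h2' : d 2 = 0 := by omega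
      have h01 : d 0 + d 1 = 1 := by omega
      have hz : ∀ m ∈ Finset.range (r+2),
          (if eeExp r m = d then coeff (eeExp r m) s else 0) = 0 := by
        intro m _; rw [if_neg]
        intro h; have := DFunLike.congr_fun h (2 : Fin 4); simp [h2'] at this
      rw [Finset.sum_congr rfl hz, Finset.sum_const_zero, zero_add]
      rcases Nat.eq_zero_or_pos (d 0) with h0 | h0
      · have hde : d = ebExp 1 := by
          apply Finsupp.ext; intro i
          fin_cases i <;> simp [hb1] <;> omega
        rw [if_pos hde.symm, if_neg, zero_add, ← hde]
        intro h; have := DFunLike.congr_fun h (0 : Fin 4); simp [hb0 0] at this; omega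
      · have hde : d = ebExp 0 := by
          apply Finsupp.ext; intro i
          fin_cases i <;> simp [hb0] <;> omega
        rw [if_pos hde.symm, if_neg, add_zero, ← hde]
        intro h; have := DFunLike.congr_fun h (1 : Fin 4); simp [hb1 1] at this; omega

lemma iter_pderiv_monomial {k : Type*} [CommSemiring k] (v : Fin 4) (j : ℕ)
    (d : Fin 4 →₀ ℕ) (c : k) :
    (fun q => pderiv v q)^[j] (monomial d c) =
      monomial (d - Finsupp.single v j) (c * (d v).descFactorial j) := by
  induction j with
  | zero => simp
  | succ j ih =>
      rw [Function.iterate_succ_apply', ih]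
      show pderiv v _ = _
      rw [pderiv_monomial]
      congr 1
      · rw [tsub_tsub, ← Finsupp.single_add]
      · rw [Finsupp.tsub_apply, Finsupp.single_eq_same, Nat.descFactorial_succ]
        push_cast
        ring

lemma foldl_pderiv_replicate {k : Type*} [CommSemiring k] (v : Fin 4) (i : ℕ)
    (t : MvPolynomial (Fin 4) k) :
    List.foldl (fun q j => pderiv j q) t (List.replicate i v) = (fun q => pderiv v q)^[i] t := by
  induction i generalizing t with
  | zero => simp
  | succ i ih => rw [List.replicate_succ, List.foldl_cons, Function.iterate_succ_apply]; exact ih _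

lemma iter_pderiv_sum {k : Type*} [CommSemiring k] (v : Fin 4) (i : ℕ) {ι : Type*}
    (t : Finset ι) (f : ι → MvPolynomial (Fin 4) k) :
    (fun q => pderiv v q)^[i] (∑ m ∈ t, f m) = ∑ m ∈ t, (fun q => pderiv v q)^[i] (f m) := by
  induction i with
  | zero => simp
  | succ i ih =>
      simp only [Function.iterate_succ_apply', ih, map_sum]

lemma eval_monomial_pair {k : Type*} [CommSemiring k] (p : Fin 4 → k) (a b : ℕ) (c : k) :
    eval p (monomial (Finsupp.single 0 a + Finsupp.single 1 b) c) = c * (p 0 ^ a * p 1 ^ b) := by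
  rw [eval_monomial]
  congr 1
  rw [Finsupp.prod_add_index' (fun i => pow_zero (p i)) (fun i b1 b2 => pow_add (p i) b1 b2),
      ]
  simp [Finsupp.prod_single_index]

section Conds
variable {k : Type*} [Field k] {r : ℕ} {s : MvPolynomial (Fin 4) k}
  {p : Fin 4 → k}

lemma hirz_pd2 (hhom : s.IsWeightedHomogeneous (hirzebruchCoxWeight r) (r + 1, 1)) :
    pderiv (2 : Fin 4) s = ∑ m ∈ Finset.range (r + 2),
      monomial (eeExp r m - Finsupp.single 2 1) (coeff (eeExp r m) s) := by
  conv_lhs => rw [hirz_decomp s hhom]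
  rw [map_add, map_add, map_sum]
  have hb0 : (ebExp 0) (2 : Fin 4) = 0 := by rw [ebExp_apply 0 2 (Or.inl rfl)]; decide
  have hb1 : (ebExp 1) (2 : Fin 4) = 0 := by rw [ebExp_apply 1 2 (Or.inr rfl)]; decide
  have he2 : ∀ m : ℕ, (eeExp r m) (2 : Fin 4) = 1 := by intro m; simp
  simp [pderiv_monomial, hb0, hb1, he2]

lemma hirz_condA (hr : 2 ≤ r)
    (hhom : s.IsWeightedHomogeneous (hirzebruchCoxWeight r) (r + 1, 1))
    (hmp : coxMultAtLeast s (r + 1) p) (i : ℕ) (hi : i < r) :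
    ∑ m ∈ Finset.range (r + 2), coeff (eeExp r m) s * (m.descFactorial i : k) *
      (p 0 ^ (m - i) * p 1 ^ (r + 1 - m)) = 0 := by
  have hc := hmp ((2 : Fin 4) :: List.replicate i 0) (by simp; omega)
  rw [List.foldl_cons, foldl_pderiv_replicate, hirz_pd2 hhom, iter_pderiv_sum, map_sum] at hc
  rw [← hc]
  apply Finset.sum_congr rfl
  intro m _
  rw [iter_pderiv_monomial]
  have hx : eeExp r m - Finsupp.single 2 1 - Finsupp.single 0 i =
      Finsupp.single 0 (m - i) + Finsupp.single 1 (r + 1 - m) := by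
    apply Finsupp.ext; intro w
    fin_cases w <;> simp [Finsupp.tsub_apply, Finsupp.single_apply]
  have hy : ((eeExp r m - Finsupp.single 2 1 : Fin 4 →₀ ℕ) 0) = m := by
    simp [Finsupp.tsub_apply]
  rw [hx, hy, eval_monomial_pair, mul_assoc]

lemma hirz_condB (hr : 2 ≤ r)
    (hhom : s.IsWeightedHomogeneous (hirzebruchCoxWeight r) (r + 1, 1))
    (hmp : coxMultAtLeast s (r + 1) p) (i : ℕ) (hi : i < r) :
    ∑ m ∈ Finset.range (r + 2), coeff (eeExp r m) s * ((r + 1 - m).descFactorial i : k) *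
      (p 0 ^ m * p 1 ^ (r + 1 - m - i)) = 0 := by
  have hc := hmp ((2 : Fin 4) :: List.replicate i 1) (by simp; omega)
  rw [List.foldl_cons, foldl_pderiv_replicate, hirz_pd2 hhom, iter_pderiv_sum, map_sum] at hc
  rw [← hc]
  apply Finset.sum_congr rfl
  intro m _
  rw [iter_pderiv_monomial]
  have hx : eeExp r m - Finsupp.single 2 1 - Finsupp.single 1 i =
      Finsupp.single 0 m + Finsupp.single 1 (r + 1 - m - i) := by
    apply Finsupp.ext; intro w
    fin_cases w <;> simp [Finsupp.tsub_apply, Finsupp.single_apply]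
  have hy : ((eeExp r m - Finsupp.single 2 1 : Fin 4 →₀ ℕ) 1) = r + 1 - m := by
    simp [Finsupp.tsub_apply]
  rw [hx, hy, eval_monomial_pair, mul_assoc]

lemma hirz_condb (hr : 2 ≤ r)
    (hhom : s.IsWeightedHomogeneous (hirzebruchCoxWeight r) (r + 1, 1))
    (hmp : coxMultAtLeast s (r + 1) p) :
    coeff (ebExp 0) s = 0 ∧ coeff (ebExp 1) s = 0 := by
  have hpd3 : pderiv (3 : Fin 4) s =
      monomial (Finsupp.single 0 1) (coeff (ebExp 0) s)
        + monomial (Finsupp.single 1 1) (coeff (ebExp 1) s) := by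
    conv_lhs => rw [hirz_decomp s hhom]
    rw [map_add, map_add, map_sum]
    have he3 : ∀ m : ℕ, (eeExp r m) (3 : Fin 4) = 0 := by intro m; simp
    have hb0 : (ebExp 0) (3 : Fin 4) = 1 := by rw [ebExp_apply 0 3 (Or.inl rfl)]; decide
    have hb1 : (ebExp 1) (3 : Fin 4) = 1 := by rw [ebExp_apply 1 3 (Or.inr rfl)]; decide
    have hx0 : ebExp 0 - Finsupp.single 3 1 = Finsupp.single (0 : Fin 4) 1 := by
      apply Finsupp.ext; intro w
      have := fun i => ebExp_apply 0 i (Or.inl rfl)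
      fin_cases w <;> simp [Finsupp.tsub_apply, Finsupp.single_apply, this]
    have hx1 : ebExp 1 - Finsupp.single 3 1 = Finsupp.single (1 : Fin 4) 1 := by
      apply Finsupp.ext; intro w
      have := fun i => ebExp_apply 1 i (Or.inr rfl)
      fin_cases w <;> simp [Finsupp.tsub_apply, Finsupp.single_apply, this]
    simp [pderiv_monomial, he3, hb0, hb1, hx0, hx1]
  constructor
  · have hc := hmp [3, 0] (by simp; omega)
    simp only [List.foldl_cons, List.foldl_nil] at hc
    rw [hpd3, map_add, pderiv_monomial, pderiv_monomial] at hc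
    simpa [Finsupp.single_apply, eval_monomial] using hc
  · have hc := hmp [3, 1] (by simp; omega)
    simp only [List.foldl_cons, List.foldl_nil] at hc
    rw [hpd3, map_add, pderiv_monomial, pderiv_monomial] at hc
    simpa [Finsupp.single_apply, eval_monomial] using hc

end Conds

section Main
variable {k : Type*} [Field k] [CharZero k] {r : ℕ} {s : MvPolynomial (Fin 4) k}
  {p : Fin 4 → k}

/-- the dehomogenized fiber polynomial -/
noncomputable def hirzF (r : ℕ) (s : MvPolynomial (Fin 4) k) : Polynomial k :=
  ∑ m ∈ Finset.range (r + 2), Polynomial.C (coeff (eeExp r m) s) * Polynomial.X ^ m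

lemma hirzF_coeff (m : ℕ) (hm : m < r + 2) :
    (hirzF r s).coeff m = coeff (eeExp r m) s := by
  rw [hirzF, Polynomial.finset_sum_coeff]
  rw [Finset.sum_eq_single_of_mem m (Finset.mem_range.mpr hm)]
  · simp [Polynomial.coeff_C_mul, Polynomial.coeff_X_pow]
  · intro b _ hb
    simp [Polynomial.coeff_C_mul, Polynomial.coeff_X_pow, hb, Ne.symm hb]

lemma hirz_dvd (hr : 2 ≤ r)
    (hhom : s.IsWeightedHomogeneous (hirzebruchCoxWeight r) (r + 1, 1))
    (hmp : coxMultAtLeast s (r + 1) p) (hp1 : p 1 ≠ 0) :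
    (Polynomial.X - Polynomial.C (p 0 / p 1)) ^ r ∣ hirzF r s := by
  by_cases hF : hirzF r s = (0 : Polynomial k)
  · rw [hF]; exact dvd_zero _
  have root : ∀ i ≤ r - 1,
      (Polynomial.derivative^[i] (hirzF r s)).IsRoot (p 0 / p 1) := by
    intro i hi
    have hi' : i < r := by omega
    have hA := hirz_condA hr hhom hmp i hi'
    have hder : Polynomial.derivative^[i] (hirzF r s) = ∑ m ∈ Finset.range (r + 2),
        Polynomial.C (coeff (eeExp r m) s) *
          (Polynomial.C ((m.descFactorial i : k)) * Polynomial.X ^ (m - i)) := by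
      rw [hirzF, Polynomial.iterate_derivative_sum]
      refine Finset.sum_congr rfl fun m _ => ?_
      rw [Polynomial.iterate_derivative_C_mul, Polynomial.iterate_derivative_X_pow_eq_C_mul]
    rw [Polynomial.IsRoot.def, hder, Polynomial.eval_finset_sum]
    simp only [Polynomial.eval_mul, Polynomial.eval_C, Polynomial.eval_pow, Polynomial.eval_X]
    have h2 : ∀ m ∈ Finset.range (r + 2),
        coeff (eeExp r m) s * ((m.descFactorial i : k) * (p 0 / p 1) ^ (m - i)) * p 1 ^ (r + 1 - i)
          = coeff (eeExp r m) s * (m.descFactorial i : k) * (p 0 ^ (m - i) * p 1 ^ (r + 1 - m)) := by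
      intro m hm
      by_cases hmi : m < i
      · rw [Nat.descFactorial_eq_zero_iff_lt.mpr hmi]; simp
      · push_neg at hmi
        have hm' : m ≤ r + 1 := by have := Finset.mem_range.mp hm; omega
        rw [div_pow, show r + 1 - i = (m - i) + (r + 1 - m) from by omega, pow_add]
        field_simp
    have h3 : (∑ m ∈ Finset.range (r + 2),
        coeff (eeExp r m) s * ((m.descFactorial i : k) * (p 0 / p 1) ^ (m - i))) *
          p 1 ^ (r + 1 - i) = 0 := by
      rw [Finset.sum_mul, Finset.sum_congr rfl h2, hA]
    exact (mul_eq_zero.mp h3).resolve_right (pow_ne_zero _ hp1)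
  have hfac : ((r - 1).factorial : k) ∈ nonZeroDivisors k :=
    mem_nonZeroDivisors_of_ne_zero (Nat.cast_ne_zero.mpr (Nat.factorial_ne_zero _))
  have hlt := Polynomial.lt_rootMultiplicity_of_isRoot_iterate_derivative_of_mem_nonZeroDivisors
    hF root hfac
  exact dvd_trans (pow_dvd_pow _ (by omega)) (Polynomial.pow_rootMultiplicity_dvd _ _)

lemma hirz_small (hr : 2 ≤ r)
    (hhom : s.IsWeightedHomogeneous (hirzebruchCoxWeight r) (r + 1, 1))
    (hmp : coxMultAtLeast s (r + 1) p) (hp1 : p 1 = 0) (hp0 : p 0 ≠ 0) :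
    ∀ m, 2 ≤ m → m ≤ r + 1 → coeff (eeExp r m) s = 0 := by
  intro m h2m hm
  have hi : r + 1 - m < r := by omega
  have hB := hirz_condB hr hhom hmp (r + 1 - m) hi
  rw [Finset.sum_eq_single_of_mem m (Finset.mem_range.mpr (by omega))] at hB
  · rw [show r + 1 - m - (r + 1 - m) = 0 from Nat.sub_self _, pow_zero, mul_one,
      Nat.descFactorial_self] at hB
    have := mul_ne_zero (Nat.cast_ne_zero (R := k).mpr (Nat.factorial_ne_zero (r + 1 - m)))
      (pow_ne_zero m hp0)
    rcases mul_eq_zero.mp hB with h | h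
    · rcases mul_eq_zero.mp h with h' | h'
      · exact h'
      · exact absurd h' (Nat.cast_ne_zero.mpr (Nat.factorial_ne_zero _))
    · exact absurd h (pow_ne_zero m hp0)
  · intro b hb hbm
    by_cases hz : r + 1 - b - (r + 1 - m) = 0
    · have hblt : r + 1 - b < r + 1 - m := by
        have := Finset.mem_range.mp hb; omega
      rw [Nat.descFactorial_eq_zero_iff_lt.mpr hblt]
      simp
    · rw [hp1, zero_pow hz]
      ring

end Main

/-- Theorem 4.7(a): let `r ≥ 2` and let `D = {s = 0}` be an effective divisor on the
Hirzebruch surface `F_r` in the linear system `|L_r| = |(r+1)F + E|`, i.e. `s ≠ 0` is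
Cox-homogeneous of class `(r+1)·F + E`. If two points `P, P'` (with Cox coordinates
`p, q`) both have multiplicity `≥ r+1` on `D`, then they lie in the same fiber of the
ruling `F_r → ℙ¹`, i.e. their `ℙ¹`-coordinates `(p 0 : p 1)` and `(q 0 : q 1)`
agree. -/
theorem stmt_12 (k : Type*) [Field k] [IsAlgClosed k] [CharZero k]
    (r : ℕ) (hr : 2 ≤ r)
    (s : MvPolynomial (Fin 4) k) (hs : s ≠ 0)
    (hhom : s.IsWeightedHomogeneous (hirzebruchCoxWeight r) (r + 1, 1))
    (p q : Fin 4 → k) (hp : IsCoxPoint p) (hq : IsCoxPoint q)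
    (hmp : coxMultAtLeast s (r + 1) p) (hmq : coxMultAtLeast s (r + 1) q) :
    p 0 * q 1 = p 1 * q 0 := by
  obtain ⟨hb0, hb1⟩ := hirz_condb hr hhom hmp
  have hFne : hirzF r s ≠ 0 := by
    intro hF
    apply hs
    rw [hirz_decomp s hhom, hb0, hb1]
    have hz : ∀ m ∈ Finset.range (r + 2),
        (monomial (eeExp r m)) (coeff (eeExp r m) s) = 0 := by
      intro m hm
      rw [← hirzF_coeff m (Finset.mem_range.mp hm), hF, Polynomial.coeff_zero, map_zero]
    rw [Finset.sum_congr rfl hz]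
    simp
  have hdeg : (hirzF r s).natDegree ≤ r + 1 := by
    apply Polynomial.natDegree_sum_le_of_forall_le
    intro m hm
    refine le_trans (Polynomial.natDegree_C_mul_le _ _) ?_
    rw [Polynomial.natDegree_X_pow]
    have := Finset.mem_range.mp hm; omega
  by_cases hp1 : p 1 = 0
  · by_cases hq1 : q 1 = 0
    · rw [hp1, hq1]; ring
    · exfalso
      have hp0 : p 0 ≠ 0 := hp.1.resolve_right (by simp [hp1])
      have hsm := hirz_small hr hhom hmp hp1 hp0
      have hdvd := hirz_dvd hr hhom hmq hq1
      have hdeg1 : (hirzF r s).natDegree ≤ 1 := by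
        apply Polynomial.natDegree_sum_le_of_forall_le
        intro m hm
        by_cases h2m : 2 ≤ m
        · rw [hsm m h2m (by have := Finset.mem_range.mp hm; omega), map_zero, zero_mul]
          simp
        · refine le_trans (Polynomial.natDegree_C_mul_le _ _) ?_
          rw [Polynomial.natDegree_X_pow]; omega
      have hd := Polynomial.natDegree_le_of_dvd hdvd hFne
      rw [Polynomial.natDegree_pow, Polynomial.natDegree_X_sub_C] at hd
      omega
  · by_cases hq1 : q 1 = 0
    · exfalso
      have hq0 : q 0 ≠ 0 := hq.1.resolve_right (by simp [hq1])
      have hsm := hirz_small hr hhom hmq hq1 hq0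
      have hdvd := hirz_dvd hr hhom hmp hp1
      have hdeg1 : (hirzF r s).natDegree ≤ 1 := by
        apply Polynomial.natDegree_sum_le_of_forall_le
        intro m hm
        by_cases h2m : 2 ≤ m
        · rw [hsm m h2m (by have := Finset.mem_range.mp hm; omega), map_zero, zero_mul]
          simp
        · refine le_trans (Polynomial.natDegree_C_mul_le _ _) ?_
          rw [Polynomial.natDegree_X_pow]; omega
      have hd := Polynomial.natDegree_le_of_dvd hdvd hFne
      rw [Polynomial.natDegree_pow, Polynomial.natDegree_X_sub_C] at hd
      omega
    · by_contra hne
      have hab : p 0 / p 1 ≠ q 0 / q 1 := by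
        intro h
        apply hne
        rw [div_eq_div_iff hp1 hq1] at h
        rw [h, mul_comm]
      have hdvd1 := hirz_dvd hr hhom hmp hp1
      have hdvd2 := hirz_dvd hr hhom hmq hq1
      have hcop : IsCoprime (Polynomial.X - Polynomial.C (p 0 / p 1))
          (Polynomial.X - Polynomial.C (q 0 / q 1)) :=
        Polynomial.isCoprime_X_sub_C_of_isUnit_sub
          (isUnit_iff_ne_zero.mpr (sub_ne_zero_of_ne hab))
      have hdvd := (hcop.pow).mul_dvd hdvd1 hdvd2
      have hd := Polynomial.natDegree_le_of_dvd hdvd hFne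
      rw [Polynomial.natDegree_mul (pow_ne_zero _ (Polynomial.X_sub_C_ne_zero _))
          (pow_ne_zero _ (Polynomial.X_sub_C_ne_zero _))] at hd
      simp only [Polynomial.natDegree_pow, Polynomial.natDegree_X_sub_C] at hd
      omega
end
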